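/- Let h ∈ {1,2}, β, c > 0, 0 < ũ < 1, and θ₀ ∈ ℝ satisfy (1 - ũ)(β - h θ₀ ũ^{h-1}/(1 + c ũ^h)²) = 1. For θ* ∈ ℝ define the 2×2 real matrix J(θ*) = [[1 - ũ, -ũ], [(1 - ũ)(β - h(θ₀ + θ*) ũ^{h-1}/(1 + c ũ^h)²), 1 - θ* ũ^h/(1 + c ũ^h)]]. Then: (1) det J(θ*) = 1 - θ* ũ^h (1 - ũ)(1 + h + c ũ^h)/(1 + c ũ^h)² for all θ*; (2) there is a neighborhood of θ* = 0 on which the eigenvalues of J(θ*) form a nonreal complex-conjugate pair λ, λ̄ with |λ| = √(det J(θ*)); (3) the derivative of the function θ* ↦ √(det J(θ*)) at θ* = 0 equals -ũ^h (1 - ũ)(1 + h + c ũ^h)/(2(1 + c ũ^h)²), which is strictly negative; and (4) at θ* = 0 the eigenvalues λ = ((2 - ũ) ± i√(4ũ - ũ²))/2 satisfy |λ| = 1 and λ^m ≠ 1 for m = 1, 2, 3, 4. -/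

import Mathlib

open Polynomial Complex

section NSHelpers

lemma charpoly_fin2' (M : Matrix (Fin 2) (Fin 2) ℝ) :
    M.charpoly = X ^ 2 - C M.trace * X + C M.det := by
  rw [Matrix.charpoly, Matrix.det_fin_two, Matrix.charmatrix_apply_eq,
    Matrix.charmatrix_apply_eq, Matrix.charmatrix_apply_ne _ _ _ (by decide),
    Matrix.charmatrix_apply_ne _ _ _ (by decide), Matrix.trace_fin_two,
    Matrix.det_fin_two]
  simp only [map_sub, map_mul, map_add]
  ring

lemma aeval_charpoly' (M : Matrix (Fin 2) (Fin 2) ℝ) (l : ℂ) :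
    aeval l M.charpoly = l ^ 2 - (M.trace : ℂ) * l + (M.det : ℂ) := by
  rw [charpoly_fin2']
  simp [Complex.coe_algebraMap]

lemma quad_factor' (T Δ s : ℝ) (hs : s ^ 2 = 4 * Δ - T ^ 2) (l : ℂ) :
    l ^ 2 - (T : ℂ) * l + (Δ : ℂ)
      = (l - ((T : ℂ) + Complex.I * s) / 2) * (l - ((T : ℂ) - Complex.I * s) / 2) := by
  have hs' : (s : ℂ) ^ 2 = 4 * (Δ : ℂ) - (T : ℂ) ^ 2 := by
    exact_mod_cast congrArg (fun x : ℝ => (x : ℂ)) hs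
  have hI : Complex.I ^ 2 = -1 := Complex.I_sq
  linear_combination ((s:ℂ)^2/4) * hI - ((1:ℂ)/4) * hs'

lemma quad_root_iff' (T Δ s : ℝ) (hs : s ^ 2 = 4 * Δ - T ^ 2) (l : ℂ) :
    l ^ 2 - (T : ℂ) * l + (Δ : ℂ) = 0 ↔
      l = ((T : ℂ) + Complex.I * s) / 2 ∨ l = ((T : ℂ) - Complex.I * s) / 2 := by
  rw [quad_factor' T Δ s hs l, mul_eq_zero, sub_eq_zero, sub_eq_zero]

lemma mu_abs' (T Δ s : ℝ) (hs : s ^ 2 = 4 * Δ - T ^ 2) :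
    ‖((T : ℂ) + Complex.I * s) / 2‖ = Real.sqrt Δ := by
  rw [Complex.norm_def, Complex.normSq_apply]
  have hre : (((T : ℂ) + Complex.I * s) / 2).re = T / 2 := by simp
  have him : (((T : ℂ) + Complex.I * s) / 2).im = s / 2 := by simp
  rw [hre, him]
  congr 1
  nlinarith [hs]

lemma conj_mu' (T s : ℝ) :
    (starRingEnd ℂ) (((T : ℂ) + Complex.I * s) / 2) = ((T : ℂ) - Complex.I * s) / 2 := by
  apply Complex.ext <;>
    simp [Complex.div_re, Complex.div_im, Complex.normSq_apply] <;> ring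

lemma pow_ne_one' (z : ℂ) (hx : 1 / 2 < z.re) (hy : z.im ≠ 0)
    (hxy : z.re ^ 2 + z.im ^ 2 = 1) :
    ∀ m : ℕ, 1 ≤ m → m ≤ 4 → z ^ m ≠ 1 := by
  set x := z.re with hxdef
  set y := z.im with hydef
  have him2 : (z ^ 2).im = 2 * x * y := by
    simp [sq, Complex.mul_im]; ring
  have hxy0 : x * y ≠ 0 := by
    intro h
    rcases mul_eq_zero.mp h with h | h
    · linarith
    · exact hy h
  intro m hm1 hm4
  interval_cases m
  · intro h
    apply hy
    rw [hydef, show z = 1 from by simpa using h]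
    simp
  · intro h
    have h2 := congrArg Complex.im h
    rw [him2] at h2
    simp only [Complex.one_im] at h2
    exact hxy0 (by linarith)
  · intro h
    have him3 : (z ^ 3).im = 3 * x ^ 2 * y - y ^ 3 := by
      simp [pow_succ, Complex.mul_im, Complex.mul_re]; ring
    have h3 := congrArg Complex.im h
    rw [him3] at h3
    simp at h3
    have hx2 : (0:ℝ) < 4 * x ^ 2 - 1 := by nlinarith
    have key : y * (4 * x ^ 2 - 1) = 0 := by linear_combination h3 + y * hxy
    rcases mul_eq_zero.mp key with h | h
    · exact hy h
    · linarith
  · intro h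
    have h2 : (z ^ 2 - 1) * (z ^ 2 + 1) = 0 := by linear_combination h
    have him0 : (z ^ 2).im = 0 := by
      rcases mul_eq_zero.mp h2 with h | h
      · rw [sub_eq_zero] at h; rw [h]; simp
      · have hz : z ^ 2 = -1 := by linear_combination h
        rw [hz]; simp
    rw [him2] at him0
    exact hxy0 (by linarith)

lemma NS_aux' (u A K : ℝ) (hu0 : 0 < u) (hu1 : u < 1)
    (M : ℝ → Matrix (Fin 2) (Fin 2) ℝ)
    (htr : ∀ t, (M t).trace = 2 - u - A * t)
    (hdet : ∀ t, (M t).det = 1 - K * t) :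
    (∃ ε : ℝ, 0 < ε ∧ ∀ t : ℝ, |t| < ε →
      ∃ μ : ℂ, μ.im ≠ 0 ∧
        ‖μ‖ = Real.sqrt ((M t).det) ∧
        ∀ l : ℂ, Polynomial.aeval l (M t).charpoly = 0 ↔
          (l = μ ∨ l = (starRingEnd ℂ) μ)) ∧
    HasDerivAt (fun t : ℝ => Real.sqrt ((M t).det)) (-(K/2)) 0 ∧
    (‖(2 - (u : ℂ) + Complex.I * (Real.sqrt (4 * u - u ^ 2) : ℝ)) / 2‖ = 1 ∧
     (∀ l : ℂ, Polynomial.aeval l (M 0).charpoly = 0 ↔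
        (l = (2 - (u : ℂ) + Complex.I * (Real.sqrt (4 * u - u ^ 2) : ℝ)) / 2 ∨
         l = (2 - (u : ℂ) - Complex.I * (Real.sqrt (4 * u - u ^ 2) : ℝ)) / 2)) ∧
     (∀ m : ℕ, 1 ≤ m → m ≤ 4 →
        ((2 - (u : ℂ) + Complex.I * (Real.sqrt (4 * u - u ^ 2) : ℝ)) / 2) ^ m ≠ 1 ∧
        ((2 - (u : ℂ) - Complex.I * (Real.sqrt (4 * u - u ^ 2) : ℝ)) / 2) ^ m ≠ 1)) := by
  have h4u : (0:ℝ) < 4 * u - u ^ 2 := by nlinarith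
  set s₀ : ℝ := Real.sqrt (4 * u - u ^ 2) with hs₀def
  have hs₀sq : s₀ ^ 2 = 4 * 1 - (2 - u) ^ 2 := by
    rw [hs₀def, Real.sq_sqrt h4u.le]; ring
  have hs₀pos : 0 < s₀ := Real.sqrt_pos.mpr h4u
  have hcast : ((2 - u : ℝ) : ℂ) = 2 - (u : ℂ) := by push_cast; ring
  refine ⟨?_, ?_, ?_, ?_, ?_⟩
  · have hopen : IsOpen {t : ℝ | (2 - u - A * t) ^ 2 - 4 * (1 - K * t) < 0} := by
      apply isOpen_lt _ continuous_const
      fun_prop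
    have h0 : (0:ℝ) ∈ {t : ℝ | (2 - u - A * t) ^ 2 - 4 * (1 - K * t) < 0} := by
      simp only [Set.mem_setOf_eq, mul_zero, sub_zero]
      nlinarith
    obtain ⟨ε, hε, hball⟩ := Metric.isOpen_iff.mp hopen 0 h0
    refine ⟨ε, hε, fun t ht => ?_⟩
    have htS : (2 - u - A * t) ^ 2 - 4 * (1 - K * t) < 0 :=
      hball (by simpa [Metric.mem_ball, Real.dist_eq] using ht)
    set T : ℝ := 2 - u - A * t with hTdef
    set Δ : ℝ := 1 - K * t with hΔdef
    have hd : T ^ 2 - 4 * Δ < 0 := htS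
    have hΔpos : 0 < Δ := by nlinarith [sq_nonneg T]
    set s : ℝ := Real.sqrt (4 * Δ - T ^ 2) with hsdef
    have hs : s ^ 2 = 4 * Δ - T ^ 2 := Real.sq_sqrt (by linarith)
    have hspos : 0 < s := Real.sqrt_pos.mpr (by linarith)
    refine ⟨((T : ℂ) + Complex.I * s) / 2, ?_, ?_, ?_⟩
    · simp
      positivity
    · rw [mu_abs' T Δ s hs, hdet t]
    · intro l
      rw [aeval_charpoly', htr t, hdet t, conj_mu']
      exact quad_root_iff' T Δ s hs l
  · have hfun : (fun t : ℝ => Real.sqrt ((M t).det)) = fun t => Real.sqrt (1 - K * t) :=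
      funext fun t => by rw [hdet]
    rw [hfun]
    have h1 : HasDerivAt (fun t : ℝ => 1 - K * t) (-K) 0 := by
      simpa using ((hasDerivAt_id (0:ℝ)).const_mul K).const_sub 1
    have h2 : HasDerivAt Real.sqrt (1 / (2 * Real.sqrt (1 - K * 0))) (1 - K * 0) :=
      Real.hasDerivAt_sqrt (by norm_num)
    have h3 := h2.comp 0 h1
    have hval : (1 / (2 * Real.sqrt (1 - K * 0))) * (-K) = -(K / 2) := by
      norm_num [Real.sqrt_one]; ring
    rw [hval] at h3
    exact h3
  · have := mu_abs' (2 - u) 1 s₀ hs₀sq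
    rw [Real.sqrt_one, hcast] at this
    exact this
  · intro l
    have hT : ((M 0).trace : ℂ) = ((2 - u : ℝ) : ℂ) := by rw [htr]; norm_num
    have hD : ((M 0).det : ℂ) = ((1 : ℝ) : ℂ) := by rw [hdet]; norm_num
    rw [aeval_charpoly', hT, hD, quad_root_iff' (2 - u) 1 s₀ hs₀sq l, hcast]
  · intro m hm1 hm4
    set z : ℂ := (2 - (u : ℂ) + Complex.I * (s₀ : ℝ)) / 2 with hzdef
    have hzre : z.re = (2 - u) / 2 := by simp [hzdef]
    have hzim : z.im = s₀ / 2 := by simp [hzdef]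
    have hzabs : ‖z‖ = 1 := by
      rw [hzdef, ← hcast]; rw [mu_abs' (2 - u) 1 s₀ hs₀sq, Real.sqrt_one]
    have hxy : z.re ^ 2 + z.im ^ 2 = 1 := by
      have := Complex.sq_norm z
      rw [hzabs] at this
      rw [Complex.normSq_apply] at this
      nlinarith [this]
    have hwconj : (2 - (u : ℂ) - Complex.I * (s₀ : ℝ)) / 2 = (starRingEnd ℂ) z := by
      rw [hzdef, ← hcast, conj_mu', hcast]
    constructor
    · exact pow_ne_one' z (by rw [hzre]; linarith) (by rw [hzim]; positivity) hxy m hm1 hm4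
    · rw [hwconj, ← map_pow]
      intro hcon
      have hzm : z ^ m = 1 := by
        have := congrArg (starRingEnd ℂ) hcon
        simpa using this
      exact pow_ne_one' z (by rw [hzre]; linarith) (by rw [hzim]; positivity) hxy m hm1 hm4 hzm

end NSHelpers

/-- The Jacobian matrix at the origin of the perturbed (shifted) system: for the
perturbation `θ = θ₀ + θ*`,
`J(θ*) = [[1-ũ, -ũ], [(1-ũ)(β - h(θ₀+θ*)ũ^{h-1}/(1+cũ^h)²), 1 - θ* ũ^h/(1+cũ^h)]]`. -/
noncomputable def Jpert (β c u θ₀ : ℝ) (h : ℕ) (t : ℝ) : Matrix (Fin 2) (Fin 2) ℝ :=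
  !![1 - u, -u;
     (1 - u) * (β - (h : ℝ) * (θ₀ + t) * u ^ (h - 1) / (1 + c * u ^ h) ^ 2),
     1 - t * u ^ h / (1 + c * u ^ h)]

theorem neimark_sacker_conditions (β c u θ₀ : ℝ) (h : ℕ) (hh : h = 1 ∨ h = 2)
    (hβ : 0 < β) (hc : 0 < c) (hu0 : 0 < u) (hu1 : u < 1)
    (hns : (1 - u) * (β - (h : ℝ) * θ₀ * u ^ (h - 1) / (1 + c * u ^ h) ^ 2) = 1) :
    (∀ t : ℝ, (Jpert β c u θ₀ h t).det
        = 1 - t * u ^ h * (1 - u) * (1 + (h : ℝ) + c * u ^ h) / (1 + c * u ^ h) ^ 2) ∧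
    (∃ ε : ℝ, 0 < ε ∧ ∀ t : ℝ, |t| < ε →
      ∃ μ : ℂ, μ.im ≠ 0 ∧
        ‖μ‖ = Real.sqrt ((Jpert β c u θ₀ h t).det) ∧
        ∀ l : ℂ, Polynomial.aeval l (Jpert β c u θ₀ h t).charpoly = 0 ↔
          (l = μ ∨ l = (starRingEnd ℂ) μ)) ∧
    (HasDerivAt (fun t : ℝ => Real.sqrt ((Jpert β c u θ₀ h t).det))
        (-(u ^ h * (1 - u) * (1 + (h : ℝ) + c * u ^ h) / (2 * (1 + c * u ^ h) ^ 2))) 0 ∧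
      -(u ^ h * (1 - u) * (1 + (h : ℝ) + c * u ^ h) / (2 * (1 + c * u ^ h) ^ 2)) < 0) ∧
    (‖(2 - (u : ℂ) + Complex.I * (Real.sqrt (4 * u - u ^ 2) : ℝ)) / 2‖ = 1 ∧
     (∀ l : ℂ, Polynomial.aeval l (Jpert β c u θ₀ h 0).charpoly = 0 ↔
        (l = (2 - (u : ℂ) + Complex.I * (Real.sqrt (4 * u - u ^ 2) : ℝ)) / 2 ∨
         l = (2 - (u : ℂ) - Complex.I * (Real.sqrt (4 * u - u ^ 2) : ℝ)) / 2)) ∧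
     (∀ m : ℕ, 1 ≤ m → m ≤ 4 →
        ((2 - (u : ℂ) + Complex.I * (Real.sqrt (4 * u - u ^ 2) : ℝ)) / 2) ^ m ≠ 1 ∧
        ((2 - (u : ℂ) - Complex.I * (Real.sqrt (4 * u - u ^ 2) : ℝ)) / 2) ^ m ≠ 1)) := by
  have hDpos : (0:ℝ) < 1 + c * u ^ h := by positivity
  have hdet : ∀ t : ℝ, (Jpert β c u θ₀ h t).det
      = 1 - (u ^ h * (1 - u) * (1 + (h : ℝ) + c * u ^ h) / (1 + c * u ^ h) ^ 2) * t := by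
    intro t
    rcases hh with rfl | rfl
    · simp only [Jpert, Matrix.det_fin_two_of]
      have hne : (1 + c * u ^ 1) ≠ 0 := by positivity
      have hE : (1-u)*(1 - t*u/(1+c*u)) + u - u*(1-u)*t/(1+c*u)^2
          = 1 - u*(1-u)*(2+c*u)/(1+c*u)^2*t := by
        field_simp
        ring
      push_cast at hns ⊢
      linear_combination u * hns + hE
    · simp only [Jpert, Matrix.det_fin_two_of]
      have hne : (1 + c * u ^ 2) ≠ 0 := by positivity
      have hE : (1-u)*(1 - t*u^2/(1+c*u^2)) + u - u*(1-u)*(2*t*u)/(1+c*u^2)^2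
          = 1 - u^2*(1-u)*(3+c*u^2)/(1+c*u^2)^2*t := by
        field_simp
        ring
      push_cast at hns ⊢
      linear_combination u * hns + hE
  have htr : ∀ t : ℝ, (Jpert β c u θ₀ h t).trace
      = 2 - u - (u ^ h / (1 + c * u ^ h)) * t := by
    intro t
    simp only [Jpert, Matrix.trace_fin_two_of]
    ring
  obtain ⟨P2, P3, P4a, P4b, P4c⟩ :=
    NS_aux' u (u ^ h / (1 + c * u ^ h))
      (u ^ h * (1 - u) * (1 + (h : ℝ) + c * u ^ h) / (1 + c * u ^ h) ^ 2)
      hu0 hu1 (Jpert β c u θ₀ h) htr hdet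
  have hKval : -(u ^ h * (1 - u) * (1 + (h : ℝ) + c * u ^ h) / (1 + c * u ^ h) ^ 2 / 2)
      = -(u ^ h * (1 - u) * (1 + (h : ℝ) + c * u ^ h) / (2 * (1 + c * u ^ h) ^ 2)) := by
    rw [div_div, mul_comm ((1 + c * u ^ h) ^ 2) 2]
  refine ⟨fun t => by rw [hdet t]; ring, P2, ⟨?_, ?_⟩, P4a, P4b, P4c⟩
  · rw [← hKval]
    exact P3
  · rw [neg_lt, neg_zero]
    apply div_pos
    · have h1u : (0:ℝ) < 1 - u := by linarith
      have hhp : (0:ℝ) < 1 + (h : ℝ) + c * u ^ h := by positivity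
      positivity
    · positivity
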